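/- Let N ≥ 2 be an integer, p ∈ ℤ, θ₀ ∈ ℝ, K ∈ ℝ, and let θ*_i = θ₀ + 2πp·i/N (i = 0, …, N−1) be the splay configuration. Define V(θ) = −K Σ_{i=0}^{N−1} Σ_{j ∈ {i−1, i+1} mod N} cos(θ_j − θ_i). Then for every direction v ∈ ℝ^N, the function g(s) = V(θ* + s·v) satisfies g''(0) = 2K cos(2πp/N) · Σ_{i=0}^{N−1} (v_{i+1} − v_i)² (indices mod N). In particular, if K > 0 and cos(2πp/N) < 0 (i.e., p lies in the stable set P_ζ of Theorem 1), then g''(0) ≤ 0 for every v, so the splay state is a second-order critical point of maximum type for V. -/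

import Mathlib

open Real

/-- Second-order behaviour of the Lyapunov function at the splay state: for
any direction `v`, the function `g(s) = V(θ* + s v)` satisfies
`g''(0) = 2K cos(2πp/N) Σ_i (v_{i+1} − v_i)²`; in particular, if `K > 0` and
`cos(2πp/N) < 0` then `g''(0) ≤ 0`, so the splay state is a second-order
critical point of maximum type for `V`. -/
theorem splay_second_derivative_of_lyapunov
    (N : ℕ) [NeZero N] (hN : 2 ≤ N) (p : ℤ) (θ₀ K : ℝ)
    (θs : ZMod N → ℝ)
    (hθs : ∀ i : ZMod N, θs i = θ₀ + 2 * π * p * (i.val : ℝ) / N)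
    (V : (ZMod N → ℝ) → ℝ)
    (hV : ∀ θ : ZMod N → ℝ,
      V θ = -K * ∑ i : ZMod N,
        (Real.cos (θ (i + 1) - θ i) + Real.cos (θ (i - 1) - θ i)))
    (v : ZMod N → ℝ) (g : ℝ → ℝ)
    (hg : ∀ s : ℝ, g s = V (fun i => θs i + s * v i)) :
    deriv (deriv g) 0 =
      2 * K * Real.cos (2 * π * p / N) *
        ∑ i : ZMod N, (v (i + 1) - v i) ^ 2 ∧
    (0 < K → Real.cos (2 * π * p / N) < 0 → deriv (deriv g) 0 ≤ 0) := by
  have hNR : (N : ℝ) ≠ 0 := Nat.cast_ne_zero.mpr (by omega)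
  set A : ZMod N → ℝ := fun i => θs (i + 1) - θs i with hA
  set B : ZMod N → ℝ := fun i => θs (i - 1) - θs i with hB
  set C : ZMod N → ℝ := fun i => v (i + 1) - v i with hC
  set D : ZMod N → ℝ := fun i => v (i - 1) - v i with hD
  -- cos of forward difference
  have hcosA : ∀ i : ZMod N, Real.cos (θs (i + 1) - θs i) = Real.cos (2 * π * p / N) := by
    intro i
    obtain ⟨q, hq⟩ : ∃ q : ℕ, (i + 1).val + N * q = i.val + 1 := by
      refine ⟨(i.val + 1) / N, ?_⟩
      have h1 : (i + 1).val = (i.val + 1) % N := by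
        rw [ZMod.val_add]
        congr 1
        rw [ZMod.val_one_eq_one_mod, Nat.mod_eq_of_lt (by omega)]
      rw [h1]
      exact Nat.mod_add_div _ _
    have hval : ((i + 1).val : ℝ) = (i.val : ℝ) + 1 - N * (q : ℝ) := by
      have := congrArg (fun n : ℕ => (n : ℝ)) hq
      push_cast at this
      linarith
    rw [hθs, hθs, hval]
    have : θ₀ + 2 * π * p * ((i.val : ℝ) + 1 - N * (q : ℝ)) / N -
        (θ₀ + 2 * π * p * (i.val : ℝ) / N) =
        2 * π * p / N + ((-(p * q) : ℤ) : ℝ) * (2 * π) := by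
      push_cast
      field_simp
      ring
    rw [this, Real.cos_add_int_mul_two_pi]
  have hcosB : ∀ i : ZMod N, Real.cos (θs (i - 1) - θs i) = Real.cos (2 * π * p / N) := by
    intro i
    have := hcosA (i - 1)
    rw [sub_add_cancel] at this
    rw [← Real.cos_neg, neg_sub, this]
  -- explicit form of g
  have hgform : g = fun s => -K * ∑ i : ZMod N,
      (Real.cos (A i + s * C i) + Real.cos (B i + s * D i)) := by
    funext s
    rw [hg, hV]
    congr 1
    apply Finset.sum_congr rfl
    intro i _
    simp only [hA, hB, hC, hD]
    ring_nf
  -- first derivative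
  have hkey : ∀ i : ZMod N, ∀ s : ℝ, HasDerivAt (fun t => A i + t * C i) (C i) s := by
    intro i s
    simpa using ((hasDerivAt_id s).mul_const (C i)).const_add (A i)
  have hkeyB : ∀ i : ZMod N, ∀ s : ℝ, HasDerivAt (fun t => B i + t * D i) (D i) s := by
    intro i s
    simpa using ((hasDerivAt_id s).mul_const (D i)).const_add (B i)
  have hderiv1 : ∀ s : ℝ, HasDerivAt g
      (-K * ∑ i : ZMod N,
        (-Real.sin (A i + s * C i) * C i + -Real.sin (B i + s * D i) * D i)) s := by
    intro s
    rw [hgform]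
    apply HasDerivAt.const_mul
    apply HasDerivAt.fun_sum
    intro i _
    exact ((Real.hasDerivAt_cos (A i + s * C i)).comp s (hkey i s)).add
      ((Real.hasDerivAt_cos (B i + s * D i)).comp s (hkeyB i s))
  have hdg : deriv g = fun s => -K * ∑ i : ZMod N,
      (-Real.sin (A i + s * C i) * C i + -Real.sin (B i + s * D i) * D i) := by
    funext s; exact (hderiv1 s).deriv
  -- second derivative at 0
  have hderiv2 : HasDerivAt (deriv g)
      (-K * ∑ i : ZMod N,
        (-(Real.cos (A i + 0 * C i) * C i) * C i + -(Real.cos (B i + 0 * D i) * D i) * D i)) 0 := by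
    rw [hdg]
    apply HasDerivAt.const_mul
    apply HasDerivAt.fun_sum
    intro i _
    exact ((((Real.hasDerivAt_sin (A i + 0 * C i)).comp 0 (hkey i 0)).neg).mul_const (C i)).add
      ((((Real.hasDerivAt_sin (B i + 0 * D i)).comp 0 (hkeyB i 0)).neg).mul_const (D i))
  have hval2 : deriv (deriv g) 0 =
      2 * K * Real.cos (2 * π * p / N) * ∑ i : ZMod N, (v (i + 1) - v i) ^ 2 := by
    rw [hderiv2.deriv]
    have hsimp : ∀ i : ZMod N,
        (-(Real.cos (A i + 0 * C i) * C i) * C i + -(Real.cos (B i + 0 * D i) * D i) * D i) =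
        -Real.cos (2 * π * p / N) * (C i ^ 2 + D i ^ 2) := by
      intro i
      have h1 : A i + 0 * C i = A i := by ring
      have h2 : B i + 0 * D i = B i := by ring
      rw [h1, h2, hA, hB]
      simp only
      rw [hcosA i, hcosB i]
      ring
    rw [Finset.sum_congr rfl (fun i _ => hsimp i), ← Finset.mul_sum, Finset.sum_add_distrib]
    have hre : ∑ i : ZMod N, D i ^ 2 = ∑ i : ZMod N, C i ^ 2 := by
      have := Fintype.sum_equiv (Equiv.addRight (1 : ZMod N))
        (fun i => D (i + 1) ^ 2) (fun i => D i ^ 2) (fun i => rfl)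
      rw [← this]
      apply Finset.sum_congr rfl
      intro i _
      simp only [hC, hD, add_sub_cancel_right]
      ring
    rw [hre]
    simp only [hC]
    ring
  refine ⟨hval2, fun hK hcos => ?_⟩
  rw [hval2]
  have hsum : 0 ≤ ∑ i : ZMod N, (v (i + 1) - v i) ^ 2 :=
    Finset.sum_nonneg fun i _ => sq_nonneg _
  have : 2 * K * Real.cos (2 * π * p / N) ≤ 0 := by nlinarith
  exact mul_nonpos_of_nonpos_of_nonneg this hsum
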